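/- Let n be a positive integer and let A and B be n×n complex Hermitian matrices such that A + tB is positive definite for every t ∈ [0,1]. Then log det(A+B) − log det(A) − tr(A⁻¹B) = −∫₀¹ t ( ∫₀¹ tr( (A+stB)⁻¹ B (A+stB)⁻¹ B ) ds ) dt, and all the traces appearing are real numbers. -/

import Mathlib

open scoped ComplexOrder

open Matrix Polynomial

attribute [local instance] Matrix.linftyOpNormedRing Matrix.linftyOpNormedAlgebra

namespace LogdetAux

variable {n : ℕ}

noncomputable def traceCLM (n : ℕ) : Matrix (Fin n) (Fin n) ℂ →L[ℂ] ℂ :=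
  LinearMap.toContinuousLinearMap (Matrix.traceLinearMap (Fin n) ℂ ℂ)

@[simp] lemma traceCLM_apply (X : Matrix (Fin n) (Fin n) ℂ) :
    traceCLM n X = Matrix.trace X := rfl

theorem hasDerivAt_matrix_inv (M : ℝ → Matrix (Fin n) (Fin n) ℂ) (t : ℝ)
    (B : Matrix (Fin n) (Fin n) ℂ)
    (hM : HasDerivAt M B t) (hU : IsUnit (M t)) :
    HasDerivAt (fun s => (M s)⁻¹) (-((M t)⁻¹ * B * (M t)⁻¹)) t := by
  obtain ⟨u, hu⟩ := hU
  have h1 := (hasFDerivAt_ringInverse (𝕜 := ℂ) u).restrictScalars ℝ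
  rw [hu] at h1
  have h2 := h1.comp_hasDerivAt t hM
  have hcoe : ((u⁻¹ : (Matrix (Fin n) (Fin n) ℂ)ˣ) : Matrix (Fin n) (Fin n) ℂ) = (M t)⁻¹ := by
    rw [Matrix.nonsing_inv_eq_ringInverse, ← hu, Ring.inverse_unit]
  have h3 : (fun s => Ring.inverse (M s)) = fun s => (M s)⁻¹ := by
    funext s; rw [Matrix.nonsing_inv_eq_ringInverse]
  rw [Function.comp_def, h3] at h2
  refine h2.congr_deriv ?_
  simp [hcoe]

theorem hasDerivAt_det_path (A B : Matrix (Fin n) (Fin n) ℂ) (t₀ : ℝ)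
    (hU : IsUnit (A + (t₀:ℂ) • B)) :
    HasDerivAt (fun t : ℝ => (A + (t:ℂ) • B).det)
      ((A + (t₀:ℂ) • B).det * Matrix.trace ((A + (t₀:ℂ) • B)⁻¹ * B)) t₀ := by
  set M₀ := A + (t₀:ℂ) • B with hM₀
  set N := M₀⁻¹ * B with hN
  set Q := ((1 + (X : ℂ[X]) • N.map C).det).divX.divX with hQ
  have hdet : IsUnit M₀.det := (Matrix.isUnit_iff_isUnit_det M₀).mp hU
  have key : ∀ t : ℝ, (A + (t:ℂ) • B).det
      = M₀.det * (1 + Matrix.trace N * ((t:ℂ) - (t₀:ℂ))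
          + Q.eval ((t:ℂ) - (t₀:ℂ)) * (((t:ℂ) - (t₀:ℂ)) * ((t:ℂ) - (t₀:ℂ)))) := by
    intro t
    have h1 : A + (t:ℂ) • B = M₀ * (1 + ((t:ℂ) - (t₀:ℂ)) • N) := by
      rw [mul_add, mul_one, Matrix.mul_smul, hN, ← Matrix.mul_assoc,
        Matrix.mul_nonsing_inv _ hdet, Matrix.one_mul, hM₀]
      module
    rw [h1, Matrix.det_mul, Matrix.det_one_add_smul]; ring
  have hid : HasDerivAt (fun t : ℝ => ((t:ℝ):ℂ)) 1 t₀ := by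
    exact Complex.ofRealCLM.hasDerivAt
  have hc : HasDerivAt (fun t : ℝ => ((t:ℂ) - (t₀:ℂ))) 1 t₀ := hid.sub_const _
  have hc0 : ((t₀:ℂ) - (t₀:ℂ)) = 0 := by ring
  have hQd : HasDerivAt (fun t : ℝ => Q.eval ((t:ℂ) - (t₀:ℂ)))
      (Q.derivative.eval 0) t₀ := by
    have hg := Q.hasDerivAt (0:ℂ)
    rw [← hc0] at hg
    simpa [Function.comp_def] using HasDerivAt.scomp t₀ hg hc
  have hsq : HasDerivAt (fun t : ℝ => ((t:ℂ) - (t₀:ℂ)) * ((t:ℂ) - (t₀:ℂ))) 0 t₀ := by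
    have := hc.mul hc
    simp [hc0] at this; exact this
  have hprod : HasDerivAt (fun t : ℝ => Q.eval ((t:ℂ) - (t₀:ℂ))
      * (((t:ℂ) - (t₀:ℂ)) * ((t:ℂ) - (t₀:ℂ)))) 0 t₀ := by
    have := hQd.mul hsq
    simp [hc0] at this; exact this
  have hlin : HasDerivAt (fun t : ℝ => Matrix.trace N * ((t:ℂ) - (t₀:ℂ)))
      (Matrix.trace N) t₀ := by
    simpa using hc.const_mul (Matrix.trace N)
  have hsum : HasDerivAt (fun t : ℝ => (1 : ℂ) + Matrix.trace N * ((t:ℂ) - (t₀:ℂ))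
      + Q.eval ((t:ℂ) - (t₀:ℂ)) * (((t:ℂ) - (t₀:ℂ)) * ((t:ℂ) - (t₀:ℂ))))
      (Matrix.trace N) t₀ := by
    have := (hlin.const_add 1).add hprod
    simp at this; exact this
  have h := hsum.const_mul M₀.det
  simp_rw [← key] at h
  exact h

theorem im_trace_inv_mul (M B : Matrix (Fin n) (Fin n) ℂ)
    (hM : M.PosDef) (hB : B.IsHermitian) :
    (Matrix.trace (M⁻¹ * B)).im = 0 := by
  have hMi : M⁻¹ᴴ = M⁻¹ := hM.isHermitian.inv
  have h2 : star (Matrix.trace (M⁻¹ * B)) = Matrix.trace (M⁻¹ * B) := by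
    rw [← Matrix.trace_conjTranspose, Matrix.conjTranspose_mul, hMi, hB.eq,
      Matrix.trace_mul_comm]
  exact Complex.conj_eq_iff_im.mp h2

theorem im_trace_q (M B : Matrix (Fin n) (Fin n) ℂ)
    (hM : M.PosDef) (hB : B.IsHermitian) :
    (Matrix.trace (M⁻¹ * B * M⁻¹ * B)).im = 0 := by
  have hMi : M⁻¹ᴴ = M⁻¹ := hM.isHermitian.inv
  have h2 : star (Matrix.trace (M⁻¹ * B * M⁻¹ * B)) = Matrix.trace (M⁻¹ * B * M⁻¹ * B) := by
    rw [← Matrix.trace_conjTranspose]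
    have h1 : (M⁻¹ * B * M⁻¹ * B)ᴴ = (B * M⁻¹ * B) * M⁻¹ := by
      simp [Matrix.conjTranspose_mul, hMi, hB.eq, Matrix.mul_assoc]
    rw [h1, Matrix.trace_mul_comm]
    simp [Matrix.mul_assoc]
  exact Complex.conj_eq_iff_im.mp h2

end LogdetAux

open LogdetAux in
/-- **Second-order remainder identity for `log det`.**
If `A`, `B` are `n × n` complex Hermitian matrices with `A + t B` positive definite for
all `t ∈ [0,1]`, then all traces below are real and
`log det (A+B) - log det A - tr(A⁻¹B)
  = -∫₀¹ t (∫₀¹ tr((A+stB)⁻¹ B (A+stB)⁻¹ B) ds) dt`. -/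
theorem logdet_second_order_remainder (n : ℕ) (hn : 0 < n)
    (A B : Matrix (Fin n) (Fin n) ℂ)
    (hA : A.IsHermitian) (hB : B.IsHermitian)
    (hpos : ∀ t : ℝ, t ∈ Set.Icc (0:ℝ) 1 → (A + (t : ℂ) • B).PosDef) :
    (∀ s t : ℝ, s ∈ Set.Icc (0:ℝ) 1 → t ∈ Set.Icc (0:ℝ) 1 →
        (Matrix.trace ((A + ((s * t : ℝ) : ℂ) • B)⁻¹ * B *
          (A + ((s * t : ℝ) : ℂ) • B)⁻¹ * B)).im = 0) ∧
    (Matrix.trace (A⁻¹ * B)).im = 0 ∧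
    Real.log ((A + B).det.re) - Real.log (A.det.re) -
        (Matrix.trace (A⁻¹ * B)).re =
      - ∫ t in (0:ℝ)..1, t *
          ∫ s in (0:ℝ)..1,
            (Matrix.trace ((A + ((s * t : ℝ) : ℂ) • B)⁻¹ * B *
              (A + ((s * t : ℝ) : ℂ) • B)⁻¹ * B)).re := by
  classical
  set M : ℝ → Matrix (Fin n) (Fin n) ℂ := fun t => A + (t:ℂ) • B with hMdef
  have hU : ∀ t ∈ Set.Icc (0:ℝ) 1, IsUnit (M t) := fun t ht => (hpos t ht).isUnit
  have hM0 : M 0 = A := by simp [hMdef]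
  have hM1 : M 1 = A + B := by simp [hMdef]
  have hmulmem : ∀ s t : ℝ, s ∈ Set.Icc (0:ℝ) 1 → t ∈ Set.Icc (0:ℝ) 1 →
      s * t ∈ Set.Icc (0:ℝ) 1 := by
    intro s t hs ht
    constructor
    · exact mul_nonneg hs.1 ht.1
    · nlinarith [hs.1, hs.2, ht.1, ht.2]
  have hdet_re : ∀ t ∈ Set.Icc (0:ℝ) 1, 0 < ((M t).det).re ∧ ((M t).det).im = 0 := by
    intro t ht
    have hd := (hpos t ht).det_pos
    rw [Complex.lt_def] at hd
    exact ⟨by simpa [hMdef] using hd.1, by simpa [hMdef] using hd.2.symm⟩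
  set φ : ℝ → ℝ := fun t => (Matrix.trace ((M t)⁻¹ * B)).re with hφdef
  set ψ : ℝ → ℝ := fun t => (Matrix.trace ((M t)⁻¹ * B * (M t)⁻¹ * B)).re with hψdef
  set f : ℝ → ℝ := fun t => Real.log (((M t).det).re) with hfdef
  have him1 : ∀ t ∈ Set.Icc (0:ℝ) 1, (Matrix.trace ((M t)⁻¹ * B)).im = 0 :=
    fun t ht => im_trace_inv_mul _ _ (hpos t ht) hB
  have him2 : ∀ t ∈ Set.Icc (0:ℝ) 1, (Matrix.trace ((M t)⁻¹ * B * (M t)⁻¹ * B)).im = 0 :=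
    fun t ht => im_trace_q _ _ (hpos t ht) hB
  -- derivative of the path
  have hpath : ∀ t : ℝ, HasDerivAt M B t := by
    intro t
    have h0 : HasDerivAt (fun t : ℝ => t • B) ((1:ℝ) • B) t := (hasDerivAt_id t).smul_const B
    have he : M = fun t : ℝ => A + t • B := by
      funext s
      show A + (s:ℂ) • B = A + s • B
      rw [Complex.coe_smul]
    rw [he]
    have := h0.const_add A
    rw [one_smul] at this; exact this
  -- derivative of φ
  have hφ' : ∀ t ∈ Set.Icc (0:ℝ) 1, HasDerivAt φ (-(ψ t)) t := by
    intro t ht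
    have hinv := hasDerivAt_matrix_inv M t B (hpath t) (hU t ht)
    have hmul := hinv.mul_const B
    have htr := (((traceCLM n).restrictScalars ℝ).hasFDerivAt).comp_hasDerivAt t hmul
    have hre := (Complex.reCLM.hasFDerivAt).comp_hasDerivAt t htr
    simp only [Function.comp_def, ContinuousLinearMap.coe_restrictScalars',
      traceCLM_apply, Complex.reCLM_apply] at hre
    convert hre using 1
    show -(ψ t) = (Matrix.trace (-((M t)⁻¹ * B * (M t)⁻¹) * B)).re
    simp only [Matrix.neg_mul, Matrix.trace_neg, Complex.neg_re, neg_inj, hψdef,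
      Matrix.mul_assoc]
    all_goals rfl
  -- derivative of f
  have hf' : ∀ t ∈ Set.Icc (0:ℝ) 1, HasDerivAt f (φ t) t := by
    intro t ht
    have hdet := hasDerivAt_det_path A B t (hU t ht)
    have hre := (Complex.reCLM.hasFDerivAt).comp_hasDerivAt t hdet
    simp only [Function.comp_def, Complex.reCLM_apply] at hre
    have hlog := hre.log (ne_of_gt (hdet_re t ht).1)
    have h2 : (((M t).det) * Matrix.trace ((M t)⁻¹ * B)).re = ((M t).det).re * φ t := by
      rw [Complex.mul_re, (hdet_re t ht).2, him1 t ht]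
      simp [hφdef]
    rw [h2] at hlog
    have h3 : ((M t).det).re * φ t / ((M t).det).re = φ t := by
      rw [mul_comm, mul_div_assoc, div_self (ne_of_gt (hdet_re t ht).1), mul_one]
    rw [h3] at hlog
    exact hlog
  -- continuity
  have hφcont : ContinuousOn φ (Set.Icc (0:ℝ) 1) := fun t ht =>
    ((hφ' t ht).continuousAt).continuousWithinAt
  have hinvcont : ContinuousOn (fun t => (M t)⁻¹) (Set.Icc (0:ℝ) 1) := fun t ht =>
    ((hasDerivAt_matrix_inv M t B (hpath t) (hU t ht)).continuousAt).continuousWithinAt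
  have hψcont : ContinuousOn ψ (Set.Icc (0:ℝ) 1) := by
    have h1 : ContinuousOn (fun t => (M t)⁻¹ * B * (M t)⁻¹ * B) (Set.Icc (0:ℝ) 1) :=
      ((hinvcont.mul continuousOn_const).mul hinvcont).mul continuousOn_const
    exact Complex.continuous_re.comp_continuousOn
      ((traceCLM n).continuous.comp_continuousOn h1)
  -- FTC for f
  have hFTC1 : ∫ t in (0:ℝ)..1, φ t = f 1 - f 0 :=
    intervalIntegral.integral_eq_sub_of_hasDerivAt
      (fun t ht => hf' t (by rwa [Set.uIcc_of_le zero_le_one] at ht))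
      (by apply ContinuousOn.intervalIntegrable; rwa [Set.uIcc_of_le zero_le_one])
  -- FTC for φ
  have hFTC2 : ∀ t ∈ Set.Icc (0:ℝ) 1, (∫ u in (0:ℝ)..t, ψ u) = φ 0 - φ t := by
    intro t ht
    have hsub : Set.uIcc (0:ℝ) t ⊆ Set.Icc (0:ℝ) 1 := by
      rw [Set.uIcc_of_le ht.1]; exact Set.Icc_subset_Icc le_rfl ht.2
    have hh := intervalIntegral.integral_eq_sub_of_hasDerivAt
      (f := φ) (f' := fun u => -(ψ u))
      (fun u hu => hφ' u (hsub hu))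
      (((hψcont.mono hsub).neg).intervalIntegrable)
    rw [intervalIntegral.integral_neg] at hh
    linarith
  -- substitution
  have hsubst : ∀ t ∈ Set.Icc (0:ℝ) 1,
      t * (∫ s in (0:ℝ)..1, ψ (s * t)) = ∫ u in (0:ℝ)..t, ψ u := by
    intro t ht
    rcases eq_or_lt_of_le ht.1 with h0 | h0
    · simp [← h0]
    · rw [intervalIntegral.integral_comp_mul_right ψ (ne_of_gt h0)]
      simp only [zero_mul, one_mul, smul_eq_mul]
      rw [← mul_assoc, mul_inv_cancel₀ (ne_of_gt h0), one_mul]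
  -- combine
  have hmain : f 1 - f 0 - φ 0 = - ∫ t in (0:ℝ)..1, t * (∫ s in (0:ℝ)..1, ψ (s * t)) := by
    have hEq : Set.EqOn (fun t => t * (∫ s in (0:ℝ)..1, ψ (s * t)))
        (fun t => φ 0 - φ t) (Set.uIcc (0:ℝ) 1) := by
      intro t ht
      rw [Set.uIcc_of_le zero_le_one] at ht
      simp only
      rw [hsubst t ht, hFTC2 t ht]
    have hφint : IntervalIntegrable φ MeasureTheory.volume 0 1 := by
      apply ContinuousOn.intervalIntegrable; rwa [Set.uIcc_of_le zero_le_one]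
    rw [intervalIntegral.integral_congr hEq,
      intervalIntegral.integral_sub intervalIntegrable_const hφint,
      intervalIntegral.integral_const, hFTC1]
    simp only [smul_eq_mul, sub_zero, one_mul]
    ring
  refine ⟨?_, ?_, ?_⟩
  · intro s t hs ht
    exact him2 (s * t) (hmulmem s t hs ht)
  · have := him1 0 (Set.left_mem_Icc.mpr zero_le_one)
    rwa [hM0] at this
  · have h1 : f 1 = Real.log ((A + B).det.re) := by simp only [hfdef]; rw [hM1]
    have h0 : f 0 = Real.log (A.det.re) := by simp only [hfdef]; rw [hM0]
    have hφ0 : φ 0 = (Matrix.trace (A⁻¹ * B)).re := by simp only [hφdef]; rw [hM0]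
    rw [← h1, ← h0, ← hφ0]
    exact hmain
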